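/- Let γ : ℤ → ℝ≥0 have finite support S = {s₁, ..., s_N}, all values positive on S. Then inf_{0<p<1} Σ_i γ(s_i)^p equals the maximum over probability vectors (y₁,...,y_N) (y_i ≥ 0, Σ y_i = 1) of 2^{H(y₁,...,y_N)} · min(1, γ(s₁)^{y₁}···γ(s_N)^{y_N}), where H is the binary entropy H(y) = -Σ y_i log₂ y_i. -/

import Mathlib

open Finset Set

lemma two_rpow_sum {ι : Type*} (T : Finset ι) (f : ι → ℝ) :
    (2:ℝ) ^ (∑ n ∈ T, f n) = ∏ n ∈ T, (2:ℝ) ^ f n :=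
  Real.rpow_sum_of_pos two_pos f T

lemma gibbs_aux (γ : ℤ → ℝ) (S : Finset ℤ) (hγ : ∀ n ∈ S, 0 < γ n)
    (y : ℤ → ℝ) (hy0 : ∀ n, 0 ≤ y n) (hy1 : ∑ n ∈ S, y n = 1)
    {p : ℝ} (hp : p ∈ Set.Ioo (0:ℝ) 1) :
    (2:ℝ) ^ (-(∑ n ∈ S, y n * Real.logb 2 (y n))) *
      min 1 (∏ n ∈ S, γ n ^ y n) ≤ ∑ n ∈ S, γ n ^ p := by
  classical
  set T : Finset ℤ := S.filter (fun n => y n ≠ 0) with hT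
  have hsub : T ⊆ S := Finset.filter_subset _ _
  have hyT : ∀ n ∈ T, 0 < y n := fun n hn =>
    lt_of_le_of_ne (hy0 n) (Ne.symm (Finset.mem_filter.1 hn).2)
  have hzero : ∀ n ∈ S, n ∉ T → y n = 0 := by
    intro n hnS hnT
    by_contra h
    exact hnT (Finset.mem_filter.2 ⟨hnS, h⟩)
  have hsumT : ∑ n ∈ T, y n = 1 := by
    rw [hT, Finset.sum_filter_ne_zero]; exact hy1
  -- the product over S equals product over T
  have hPT : ∏ n ∈ S, γ n ^ y n = ∏ n ∈ T, γ n ^ y n := by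
    refine (Finset.prod_subset hsub ?_).symm
    intro n hnS hnT
    rw [hzero n hnS hnT, Real.rpow_zero]
  have hAT : ∑ n ∈ S, y n * Real.logb 2 (y n)
      = ∑ n ∈ T, y n * Real.logb 2 (y n) := by
    refine (Finset.sum_subset hsub ?_).symm
    intro n hnS hnT
    rw [hzero n hnS hnT, zero_mul]
  set P : ℝ := ∏ n ∈ S, γ n ^ y n with hPdef
  have hPpos : 0 < P := Finset.prod_pos fun n hn =>
    Real.rpow_pos_of_pos (hγ n hn) _
  set A : ℝ := ∑ n ∈ S, y n * Real.logb 2 (y n) with hAdef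
  -- y^y terms: ∏_T y^y = 2^A
  have hyy : ∏ n ∈ T, y n ^ y n = (2:ℝ) ^ A := by
    rw [hAT, two_rpow_sum]
    refine Finset.prod_congr rfl ?_
    intro n hn
    rw [mul_comm, Real.rpow_mul (by norm_num : (0:ℝ) ≤ 2),
      Real.rpow_logb two_pos (by norm_num) (hyT n hn)]
  -- weighted AM-GM
  have h1 : ∏ n ∈ T, (γ n ^ p / y n) ^ y n ≤ ∑ n ∈ T, y n * (γ n ^ p / y n) :=
    Real.geom_mean_le_arith_mean_weighted T y _ (fun n _ => hy0 n) hsumT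
      (fun n hn => div_nonneg (Real.rpow_nonneg (hγ n (hsub hn)).le _) (hy0 n))
  have h2 : ∑ n ∈ T, y n * (γ n ^ p / y n) = ∑ n ∈ T, γ n ^ p := by
    refine Finset.sum_congr rfl ?_
    intro n hn
    rw [mul_comm, div_mul_cancel₀ _ (hyT n hn).ne']
  have h3 : ∏ n ∈ T, (γ n ^ p / y n) ^ y n = P ^ p / (2:ℝ) ^ A := by
    have step : ∀ n ∈ T, (γ n ^ p / y n) ^ y n = (γ n ^ y n) ^ p / y n ^ y n := by
      intro n hn
      rw [Real.div_rpow (Real.rpow_nonneg (hγ n (hsub hn)).le _) (hy0 n)]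
      congr 1
      rw [← Real.rpow_mul (hγ n (hsub hn)).le, ← Real.rpow_mul (hγ n (hsub hn)).le,
        mul_comm]
    rw [Finset.prod_congr rfl step, Finset.prod_div_distrib,
      Real.finset_prod_rpow T _ (fun n hn => Real.rpow_nonneg (hγ n (hsub hn)).le _) p,
      ← hPT, hyy]
  have hsumS : ∑ n ∈ T, γ n ^ p ≤ ∑ n ∈ S, γ n ^ p := by
    refine Finset.sum_le_sum_of_subset_of_nonneg hsub ?_
    intro n hn _
    exact Real.rpow_nonneg (hγ n hn).le _
  have hkey : P ^ p / (2:ℝ) ^ A ≤ ∑ n ∈ S, γ n ^ p := by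
    calc P ^ p / (2:ℝ) ^ A = ∏ n ∈ T, (γ n ^ p / y n) ^ y n := h3.symm
      _ ≤ ∑ n ∈ T, y n * (γ n ^ p / y n) := h1
      _ = ∑ n ∈ T, γ n ^ p := h2
      _ ≤ ∑ n ∈ S, γ n ^ p := hsumS
  have hmin : min 1 P ≤ P ^ p := by
    rcases le_total P 1 with h | h
    · rw [min_eq_right h]
      calc P = P ^ (1:ℝ) := (Real.rpow_one P).symm
        _ ≤ P ^ p := Real.rpow_le_rpow_of_exponent_ge hPpos h hp.2.le
    · rw [min_eq_left h]
      exact Real.one_le_rpow h hp.1.le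
  calc (2:ℝ) ^ (-A) * min 1 P ≤ (2:ℝ) ^ (-A) * P ^ p := by
        exact mul_le_mul_of_nonneg_left hmin (Real.rpow_nonneg (by norm_num) _)
    _ = P ^ p / (2:ℝ) ^ A := by
        rw [Real.rpow_neg (by norm_num : (0:ℝ) ≤ 2), mul_comm, div_eq_mul_inv]
    _ ≤ ∑ n ∈ S, γ n ^ p := hkey

theorem stmt_15 (γ : ℤ → ℝ) (hpos : ∀ n, 0 ≤ γ n) (S : Finset ℤ)
    (hS : ∀ n, γ n ≠ 0 ↔ n ∈ S) (hne : S.Nonempty) :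
    IsGreatest
      {v : ℝ | ∃ y : ℤ → ℝ, (∀ n, 0 ≤ y n) ∧ (∀ n ∉ S, y n = 0) ∧
        (∑ n ∈ S, y n = 1) ∧
        v = (2 : ℝ) ^ (-(∑ n ∈ S, y n * Real.logb 2 (y n))) *
              min 1 (∏ n ∈ S, γ n ^ y n)}
      (sInf ((fun p => ∑ n ∈ S, γ n ^ p) '' Set.Ioo (0 : ℝ) 1)) := by
  classical
  have hγ : ∀ n ∈ S, 0 < γ n := fun n hn =>
    lt_of_le_of_ne (hpos n) (Ne.symm ((hS n).mpr hn))
  set F : ℝ → ℝ := fun p => ∑ n ∈ S, γ n ^ p with hFdef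
  set F' : ℝ → ℝ := fun p => ∑ n ∈ S, γ n ^ p * Real.log (γ n) with hF'def
  have hder : ∀ p : ℝ, HasDerivAt F (F' p) p := by
    intro p
    exact HasDerivAt.fun_sum fun n hn =>
      (Real.hasStrictDerivAt_const_rpow (hγ n hn) p).hasDerivAt
  have hFcont : Continuous F :=
    continuous_iff_continuousAt.2 fun p => (hder p).continuousAt
  obtain ⟨q, hq, hmin⟩ := isCompact_Icc.exists_isMinOn
    (Set.nonempty_Icc.2 zero_le_one) hFcont.continuousOn
  have hFq : 0 < F q :=
    Finset.sum_pos (fun n hn => Real.rpow_pos_of_pos (hγ n hn) q) hne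
  -- derivative sign conditions at the min
  have h1 : 0 ≤ (1 - q) * F' q := by
    rcases eq_or_lt_of_le hq.2 with h | h
    · rw [h]; simp
    · have hseg : segment ℝ q 1 ⊆ Set.Icc 0 1 := by
        rw [segment_eq_Icc h.le]
        exact Set.Icc_subset_Icc hq.1 le_rfl
      have hcone : (1:ℝ) - q ∈ posTangentConeAt (Set.Icc 0 1) q :=
        sub_mem_posTangentConeAt_of_segment_subset hseg
      have := hmin.localize.hasFDerivWithinAt_nonneg
        ((hder q).hasFDerivAt.hasFDerivWithinAt) hcone
      simpa [mul_comm] using this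
  have h2 : q * F' q ≤ 0 := by
    rcases eq_or_lt_of_le hq.1 with h | h
    · rw [← h]; simp
    · have hseg : segment ℝ q 0 ⊆ Set.Icc 0 1 := by
        rw [segment_symm, segment_eq_Icc h.le]
        exact Set.Icc_subset_Icc le_rfl hq.2
      have hcone : (0:ℝ) - q ∈ posTangentConeAt (Set.Icc 0 1) q :=
        sub_mem_posTangentConeAt_of_segment_subset hseg
      have := hmin.localize.hasFDerivWithinAt_nonneg
        ((hder q).hasFDerivAt.hasFDerivWithinAt) hcone
      have h' : 0 ≤ -q * F' q := by simpa [mul_comm] using this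
      nlinarith [h']
  -- the sInf equals F q
  have hlb : ∀ v ∈ (fun p => ∑ n ∈ S, γ n ^ p) '' Set.Ioo (0:ℝ) 1, F q ≤ v := by
    rintro v ⟨p, hp, rfl⟩
    exact hmin (Set.Ioo_subset_Icc_self hp)
  have hbdd : BddBelow ((fun p => ∑ n ∈ S, γ n ^ p) '' Set.Ioo (0:ℝ) 1) := ⟨F q, hlb⟩
  have hne' : ((fun p => ∑ n ∈ S, γ n ^ p) '' Set.Ioo (0:ℝ) 1).Nonempty :=
    ⟨F (1/2), ⟨1/2, by norm_num, rfl⟩⟩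
  have hsinf : sInf ((fun p => ∑ n ∈ S, γ n ^ p) '' Set.Ioo (0:ℝ) 1) = F q := by
    refine le_antisymm ?_ (le_csInf hne' hlb)
    have hqcl : q ∈ closure (Set.Ioo (0:ℝ) 1) := by
      rw [closure_Ioo (by norm_num : (0:ℝ) ≠ 1)]
      exact hq
    have hnb : (nhdsWithin q (Set.Ioo (0:ℝ) 1)).NeBot :=
      mem_closure_iff_nhdsWithin_neBot.1 hqcl
    haveI := hnb
    refine ge_of_tendsto
      ((hFcont.continuousAt.continuousWithinAt (s := Set.Ioo (0:ℝ) 1)).tendsto) ?_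
    filter_upwards [self_mem_nhdsWithin] with p hp
    exact csInf_le hbdd ⟨p, hp, rfl⟩
  constructor
  · -- membership: exhibit the optimal y
    set y : ℤ → ℝ := fun n => if n ∈ S then γ n ^ q / F q else 0 with hydef
    have hy0 : ∀ n, 0 ≤ y n := by
      intro n
      by_cases h : n ∈ S
      · simp only [hydef, if_pos h]
        exact div_nonneg (Real.rpow_nonneg (hγ n h).le _) hFq.le
      · simp [hydef, if_neg h]
    have hyout : ∀ n ∉ S, y n = 0 := fun n h => by simp [hydef, if_neg h]
    have hysum : ∑ n ∈ S, y n = 1 := by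
      have : ∑ n ∈ S, y n = (∑ n ∈ S, γ n ^ q) / F q := by
        rw [Finset.sum_div]
        exact Finset.sum_congr rfl fun n hn => by simp [hydef, if_pos hn]
      rw [this, div_self hFq.ne']
    set L : ℝ := ∑ n ∈ S, y n * Real.logb 2 (γ n) with hLdef
    have hF'L : F' q = F q * Real.log 2 * L := by
      rw [hLdef, Finset.mul_sum]
      refine Finset.sum_congr rfl ?_
      intro n hn
      simp only [hydef, if_pos hn, Real.logb]
      field_simp
    have hlog2 : (0:ℝ) < Real.log 2 := Real.log_pos one_lt_two
    have hqL : q * L ≤ 0 := by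
      rw [hF'L] at h2
      nlinarith [mul_pos hFq hlog2]
    have h1L : 0 ≤ (1 - q) * L := by
      rw [hF'L] at h1
      nlinarith [mul_pos hFq hlog2]
    -- compute the entropy term
    have hA : ∑ n ∈ S, y n * Real.logb 2 (y n) = q * L - Real.logb 2 (F q) := by
      have step : ∀ n ∈ S, y n * Real.logb 2 (y n)
          = q * (y n * Real.logb 2 (γ n)) - y n * Real.logb 2 (F q) := by
        intro n hn
        have hyn : y n = γ n ^ q / F q := by simp [hydef, if_pos hn]
        have hlogyn : Real.logb 2 (y n) = q * Real.logb 2 (γ n) - Real.logb 2 (F q) := by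
          rw [hyn, Real.logb_div (Real.rpow_pos_of_pos (hγ n hn) q).ne' hFq.ne']
          congr 1
          rw [Real.logb, Real.logb, Real.log_rpow (hγ n hn)]
          ring
        rw [hlogyn]
        ring
      rw [Finset.sum_congr rfl step, Finset.sum_sub_distrib, ← Finset.mul_sum,
        ← Finset.sum_mul, hysum, one_mul, ← hLdef]
    -- compute the product term
    have hP : ∏ n ∈ S, γ n ^ y n = (2:ℝ) ^ L := by
      rw [hLdef, two_rpow_sum]
      refine Finset.prod_congr rfl ?_
      intro n hn
      rw [mul_comm, Real.rpow_mul (by norm_num : (0:ℝ) ≤ 2),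
        Real.rpow_logb two_pos (by norm_num) (hγ n hn)]
    refine ⟨y, hy0, hyout, hysum, ?_⟩
    rw [hsinf, hA, hP]
    have hexp : (2:ℝ) ^ (-(q * L - Real.logb 2 (F q)))
        = F q * (2:ℝ) ^ (-(q * L)) := by
      rw [neg_sub, sub_eq_add_neg, Real.rpow_add two_pos,
        Real.rpow_logb two_pos (by norm_num) hFq]
    rw [hexp]
    rcases lt_trichotomy L 0 with hL | hL | hL
    · have hq1 : q = 1 := by
        by_contra hne1
        have hlt : q < 1 := lt_of_le_of_ne hq.2 hne1
        nlinarith [h1L, mul_pos (sub_pos.2 hlt) (neg_pos.2 hL)]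
      have : min 1 ((2:ℝ) ^ L) = (2:ℝ) ^ L :=
        min_eq_right (Real.rpow_le_one_of_one_le_of_nonpos one_le_two hL.le)
      rw [this, hq1, one_mul, mul_assoc, ← Real.rpow_add two_pos]
      simp
    · rw [hL]; simp
    · have hq0 : q = 0 := by
        by_contra hne0
        have hlt : 0 < q := lt_of_le_of_ne hq.1 (Ne.symm hne0)
        nlinarith [hqL, mul_pos hlt hL]
      have : min 1 ((2:ℝ) ^ L) = 1 :=
        min_eq_left (Real.one_le_rpow one_le_two hL.le)
      rw [this, hq0]
      simp
  · -- upper bound via Gibbs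
    rintro v ⟨y, hy0, hyout, hy1, rfl⟩
    refine le_csInf hne' ?_
    rintro b ⟨p, hp, rfl⟩
    exact gibbs_aux γ S hγ y hy0 hy1 hp
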